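/- The singular potential ψ_s is strictly convex on Q: for b₁ ≠ b₂ in Q and ε ∈ (0,1), ψ_s(εb₁ + (1−ε)b₂) < εψ_s(b₁) + (1−ε)ψ_s(b₂). -/

import Mathlib

open MeasureTheory Filter

def probDens {X : Type*} [MeasurableSpace X] (μ : Measure X) : Set (X → ℝ) :=
  {ρ | Integrable ρ μ ∧ 0 ≤ᵐ[μ] ρ ∧ ∫ t, ρ t ∂μ = 1}

/-- The vector of moments of `a` under the density `ρ`. -/
noncomputable def mom {X : Type*} [MeasurableSpace X] (μ : Measure X) {k : ℕ}
    (a : X → EuclideanSpace ℝ (Fin k)) (ρ : X → ℝ) : EuclideanSpace ℝ (Fin k) :=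
  (EuclideanSpace.equiv (Fin k) ℝ).symm fun i => ∫ t, a t i * ρ t ∂μ

/-- The set `Q` of admissible moments. -/
def momentSet {X : Type*} [MeasurableSpace X] (μ : Measure X) {k : ℕ}
    (a : X → EuclideanSpace ℝ (Fin k)) : Set (EuclideanSpace ℝ (Fin k)) :=
  mom μ a '' probDens μ

/-- Supporting line at `1` for a convex function on `(0,∞)`. -/
theorem support_line_aux {φ : ℝ → ℝ} {d : ℝ} (hc : ConvexOn ℝ (Set.Ioi 0) φ)
    (h1 : HasDerivAt φ d 1) {x : ℝ} (hx : 0 < x) :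
    φ 1 + d * (x - 1) ≤ φ x := by
  rcases lt_trichotomy x 1 with h | h | h
  · have := hc.slope_le_of_hasDerivAt hx (by norm_num) h h1
    rw [slope_def_field] at this
    have h2 := (div_le_iff₀ (by linarith : (0:ℝ) < 1 - x)).mp this
    nlinarith
  · simp [h]
  · have := hc.le_slope_of_hasDerivAt (by norm_num) (Set.mem_Ioi.mpr hx) h h1
    rw [slope_def_field] at this
    have h2 := (le_div_iff₀ (by linarith : (0:ℝ) < x - 1)).mp this
    linarith

theorem coord_le_norm {k : ℕ} (x : EuclideanSpace ℝ (Fin k)) (i : Fin k) : |x i| ≤ ‖x‖ := by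
  rw [EuclideanSpace.norm_eq]
  rw [show |x i| = Real.sqrt (‖x i‖ ^ 2) by rw [Real.sqrt_sq_eq_abs]; simp]
  exact Real.sqrt_le_sqrt (Finset.single_le_sum (fun j _ => sq_nonneg ‖x j‖) (Finset.mem_univ i))

/-- Strict convexity of the singular potential `ψ_s`.  Here `φ` is entropy-like
(strictly convex and `C¹` on `(0,∞)`, superlinear at `∞`, with `φ' → -∞` at `0⁺`),
and `ψ` is the singular potential: for each `b ∈ Q` the entropy functional attains its
minimum over densities generating `b` at a unique minimiser `ρmin b` (Borwein–Lewis),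
which is a.e. positive, and `ψ b` is this minimal value. -/
theorem singularPotential_strictConvex {X : Type*} [MeasurableSpace X]
    (μ : Measure X) [IsFiniteMeasure μ] {k : ℕ}
    (a : X → EuclideanSpace ℝ (Fin k)) (ha : MemLp a ⊤ μ)
    (φ φ' : ℝ → ℝ)
    (hconv : StrictConvexOn ℝ (Set.Ioi 0) φ) (hconv0 : ConvexOn ℝ (Set.Ici 0) φ)
    (hder : ∀ x ∈ Set.Ioi (0:ℝ), HasDerivAt φ (φ' x) x)
    (hderc : ContinuousOn φ' (Set.Ioi 0))
    (hsuper : Tendsto (fun x => φ x / x) atTop atTop)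
    (hder0 : Tendsto φ' (nhdsWithin 0 (Set.Ioi 0)) atBot)
    (ψ : EuclideanSpace ℝ (Fin k) → ℝ) (ρmin : EuclideanSpace ℝ (Fin k) → X → ℝ)
    (hρP : ∀ b ∈ momentSet μ a, ρmin b ∈ probDens μ)
    (hρgen : ∀ b ∈ momentSet μ a, mom μ a (ρmin b) = b)
    (hρpos : ∀ b ∈ momentSet μ a, ∀ᵐ t ∂μ, 0 < ρmin b t)
    (hρint : ∀ b ∈ momentSet μ a, Integrable (fun t => φ (ρmin b t)) μ)
    (hψ : ∀ b ∈ momentSet μ a, ψ b = ∫ t, φ (ρmin b t) ∂μ)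
    (hmin : ∀ b ∈ momentSet μ a, ∀ ρ ∈ probDens μ, mom μ a ρ = b →
      Integrable (fun t => φ (ρ t)) μ → ψ b ≤ ∫ t, φ (ρ t) ∂μ)
    (huniq : ∀ b ∈ momentSet μ a, ∀ ρ ∈ probDens μ, mom μ a ρ = b →
      Integrable (fun t => φ (ρ t)) μ → ψ b = ∫ t, φ (ρ t) ∂μ → ρ =ᵐ[μ] ρmin b) :
    ∀ b₁ ∈ momentSet μ a, ∀ b₂ ∈ momentSet μ a, b₁ ≠ b₂ →
      ∀ ε : ℝ, 0 < ε → ε < 1 →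
        ψ (ε • b₁ + (1 - ε) • b₂) < ε * ψ b₁ + (1 - ε) * ψ b₂ := by
  intro b₁ hb₁ b₂ hb₂ hne ε hε0 hε1
  have hε1' : (0:ℝ) < 1 - ε := by linarith
  set ρ₁ := ρmin b₁ with hρ₁def
  set ρ₂ := ρmin b₂ with hρ₂def
  obtain ⟨h₁int, h₁nn, h₁sum⟩ := hρP b₁ hb₁
  obtain ⟨h₂int, h₂nn, h₂sum⟩ := hρP b₂ hb₂
  have h₁pos := hρpos b₁ hb₁
  have h₂pos := hρpos b₂ hb₂
  set ρ : X → ℝ := fun t => ε * ρ₁ t + (1 - ε) * ρ₂ t with hρdef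
  have hρint' : Integrable ρ μ := (h₁int.const_mul ε).add (h₂int.const_mul (1 - ε))
  have hρpos' : ∀ᵐ t ∂μ, 0 < ρ t := by
    filter_upwards [h₁pos, h₂pos] with t h1 h2
    have : 0 < ε * ρ₁ t + (1 - ε) * ρ₂ t :=
      add_pos (mul_pos hε0 h1) (mul_pos hε1' h2)
    exact this
  have hρnn : 0 ≤ᵐ[μ] ρ := by filter_upwards [hρpos'] with t h; exact h.le
  have hρsum : ∫ t, ρ t ∂μ = 1 := by
    have : ∫ t, ρ t ∂μ = ∫ t, (ε * ρ₁ t + (1 - ε) * ρ₂ t) ∂μ := rfl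
    rw [this, integral_add (h₁int.const_mul ε) (h₂int.const_mul (1 - ε)),
      integral_const_mul, integral_const_mul, h₁sum, h₂sum]
    ring
  have hρP' : ρ ∈ probDens μ := ⟨hρint', hρnn, hρsum⟩
  -- a.e. bound on a
  have hfin : eLpNormEssSup a μ < ⊤ := by
    have := ha.eLpNorm_lt_top
    rwa [eLpNorm_exponent_top] at this
  obtain ⟨C, hC⟩ : ∃ C : ℝ, ∀ᵐ t ∂μ, ‖a t‖ ≤ C := by
    refine ⟨(eLpNormEssSup a μ).toReal, ?_⟩
    filter_upwards [ae_le_eLpNormEssSup (f := a) (μ := μ)] with t ht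
    have := ENNReal.toReal_mono hfin.ne ht
    simpa using this
  have haint : ∀ (g : X → ℝ), Integrable g μ → ∀ i : Fin k,
      Integrable (fun t => a t i * g t) μ := by
    intro g hg i
    refine hg.bdd_mul (c := C) ?_ ?_
    · exact (EuclideanSpace.proj i :
        EuclideanSpace ℝ (Fin k) →L[ℝ] ℝ).continuous.comp_aestronglyMeasurable
        ha.aestronglyMeasurable
    · filter_upwards [hC] with t ht
      exact le_trans (by simpa [Real.norm_eq_abs] using coord_le_norm (a t) i) ht
  set b : EuclideanSpace ℝ (Fin k) := ε • b₁ + (1 - ε) • b₂ with hbdef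
  have hmomρ : mom μ a ρ = b := by
    ext i
    have hb1i : ∫ t, a t i * ρ₁ t ∂μ = b₁ i := congrArg (fun v => v i) (hρgen b₁ hb₁)
    have hb2i : ∫ t, a t i * ρ₂ t ∂μ = b₂ i := congrArg (fun v => v i) (hρgen b₂ hb₂)
    have hLHS : (mom μ a ρ) i = ∫ t, a t i * ρ t ∂μ := rfl
    have hfun : (fun t => a t i * ρ t)
        = fun t => ε * (a t i * ρ₁ t) + (1 - ε) * (a t i * ρ₂ t) := by
      funext t; show a t i * (ε * ρ₁ t + (1 - ε) * ρ₂ t) = _; ring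
    rw [hLHS, hfun, integral_add ((haint ρ₁ h₁int i).const_mul ε)
      ((haint ρ₂ h₂int i).const_mul (1 - ε)), integral_const_mul, integral_const_mul,
      hb1i, hb2i]
    show ε * b₁ i + (1 - ε) * b₂ i = (ε • b₁ + (1 - ε) • b₂) i
    simp [PiLp.add_apply, PiLp.smul_apply, smul_eq_mul]
  have hbQ : b ∈ momentSet μ a := ⟨ρ, hρP', hmomρ⟩
  -- convexity upper bound
  set U : X → ℝ := fun t => ε * φ (ρ₁ t) + (1 - ε) * φ (ρ₂ t) with hUdef
  have hub : ∀ᵐ t ∂μ, φ (ρ t) ≤ U t := by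
    filter_upwards [h₁pos, h₂pos] with t h1 h2
    have := hconv0.2 (Set.mem_Ici.mpr h1.le) (Set.mem_Ici.mpr h2.le) hε0.le hε1'.le
      (by ring : ε + (1 - ε) = 1)
    simpa [smul_eq_mul] using this
  -- supporting line lower bound
  have h1mem : (1:ℝ) ∈ Set.Ioi (0:ℝ) := by norm_num
  have hlb : ∀ᵐ t ∂μ, φ 1 + φ' 1 * (ρ t - 1) ≤ φ (ρ t) := by
    filter_upwards [hρpos'] with t ht
    exact support_line_aux hconv.convexOn (hder 1 h1mem) ht
  -- measurability and integrability of φ ∘ ρ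
  have hφcont : ContinuousOn φ (Set.Ioi 0) :=
    fun x hx => (hder x hx).continuousAt.continuousWithinAt
  have hφρmeas : AEStronglyMeasurable (fun t => φ (ρ t)) μ := by
    classical
    have hmeas : Measurable ((Set.Ioi (0:ℝ)).piecewise φ (fun _ => φ 1)) :=
      ContinuousOn.measurable_piecewise hφcont continuousOn_const measurableSet_Ioi
    have hcomp : AEMeasurable (fun t => (Set.Ioi (0:ℝ)).piecewise φ (fun _ => φ 1) (ρ t)) μ :=
      hmeas.comp_aemeasurable hρint'.aemeasurable
    refine hcomp.aestronglyMeasurable.congr ?_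
    filter_upwards [hρpos'] with t ht
    simp [Set.piecewise_eq_of_mem _ _ _ (Set.mem_Ioi.mpr ht)]
  have hφ₁ := hρint b₁ hb₁
  have hφ₂ := hρint b₂ hb₂
  have hUint : Integrable U μ := (hφ₁.const_mul ε).add (hφ₂.const_mul (1 - ε))
  have hLint : Integrable (fun t => φ 1 + φ' 1 * (ρ t - 1)) μ :=
    (integrable_const (φ 1)).add ((hρint'.sub (integrable_const 1)).const_mul (φ' 1))
  have hφρint : Integrable (fun t => φ (ρ t)) μ := by
    refine Integrable.mono' (hLint.abs.add hUint.abs) hφρmeas ?_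
    filter_upwards [hub, hlb] with t h1 h2
    simp only [Pi.add_apply]
    rw [Real.norm_eq_abs, abs_le]
    constructor
    · have := neg_abs_le (φ 1 + φ' 1 * (ρ t - 1))
      have := abs_nonneg (U t)
      linarith
    · have := le_abs_self (U t)
      have := abs_nonneg (φ 1 + φ' 1 * (ρ t - 1))
      linarith
  -- the minimum property
  have hmin' := hmin b hbQ ρ hρP' hmomρ hφρint
  have hint_le : ∫ t, φ (ρ t) ∂μ ≤ ∫ t, U t ∂μ := integral_mono_ae hφρint hUint hub
  have hRHS : ∫ t, U t ∂μ = ε * ψ b₁ + (1 - ε) * ψ b₂ := by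
    rw [hψ b₁ hb₁, hψ b₂ hb₂]
    rw [show (fun t => U t) = fun t => ε * φ (ρ₁ t) + (1 - ε) * φ (ρ₂ t) from rfl,
      integral_add (hφ₁.const_mul ε) (hφ₂.const_mul (1 - ε)),
      integral_const_mul, integral_const_mul]
  -- strictness
  have hstrict : ∫ t, φ (ρ t) ∂μ ≠ ∫ t, U t ∂μ := by
    intro heq
    have hnn : 0 ≤ᵐ[μ] fun t => U t - φ (ρ t) := by
      filter_upwards [hub] with t h
      simp only [Pi.zero_apply]
      linarith
    have hint0 : ∫ t, (U t - φ (ρ t)) ∂μ = 0 := by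
      rw [integral_sub hUint hφρint, heq]; ring
    have hae0 := (integral_eq_zero_iff_of_nonneg_ae hnn (hUint.sub hφρint)).mp hint0
    have heqρ : ρ₁ =ᵐ[μ] ρ₂ := by
      filter_upwards [hae0, h₁pos, h₂pos] with t h0 h1 h2
      by_contra hne'
      have hlt := hconv.2 (Set.mem_Ioi.mpr h1) (Set.mem_Ioi.mpr h2) hne' hε0 hε1'
        (by ring : ε + (1 - ε) = 1)
      simp only [smul_eq_mul] at hlt
      have h0' : U t - φ (ρ t) = 0 := h0
      have : φ (ρ t) = φ (ε * ρ₁ t + (1 - ε) * ρ₂ t) := rfl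
      rw [hUdef] at h0'
      simp only at h0'
      linarith [hlt, h0']
    apply hne
    have hmm : mom μ a ρ₁ = mom μ a ρ₂ := by
      ext i
      exact integral_congr_ae (by filter_upwards [heqρ] with t h; rw [h])
    rw [← hρgen b₁ hb₁, ← hρgen b₂ hb₂, hmm]
  calc ψ b ≤ ∫ t, φ (ρ t) ∂μ := hmin'
    _ < ∫ t, U t ∂μ := lt_of_le_of_ne hint_le hstrict
    _ = ε * ψ b₁ + (1 - ε) * ψ b₂ := hRHS
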